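/- Let X = ℝⁿ, Y = ℝˡ with l ≤ n, P a metric space, and f_j : ℝⁿ × P → ℝ (j = 1,…,l) continuous functions such that, for all (x,p) in a neighborhood of (x̄,p̄), each f_j(·,p) is quasidifferentiable at x with quasidifferential [∂̲ₓf_j(x,p), ∂̄ₓf_j(x,p)], and the set-valued maps (x,p) ↦ ∂̲ₓf_j(x,p) and (x,p) ↦ ∂̄ₓf_j(x,p) are outer semicontinuous at (x̄,p̄). Set F = (f₁,…,f_l) : ℝⁿ × P → ℝˡ and suppose that every l×n matrix whose j-th row equals v_j + w_j for some v_j ∈ ∂̲ₓf_j(x̄,p̄) and w_j ∈ ∂̄ₓf_j(x̄,p̄) has full rank l. Then there exist K > 0 and δ > 0 such that for every p with d(p,p̄) < δ the single-valued mapping x ↦ F(x,p) is metrically regular near (x̄, F(x̄,p)) with norm of metric regularity not exceeding K. -/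

import Mathlib

open Filter Topology Set Pointwise RealInnerProductSpace

/-- Dini directional differentiability of `f` at `x` with directional derivative `f'`. -/
def HasDiniDerivE {n : ℕ} (f : EuclideanSpace ℝ (Fin n) → ℝ) (x : EuclideanSpace ℝ (Fin n))
    (f' : EuclideanSpace ℝ (Fin n) → ℝ) : Prop :=
  ∀ h, Tendsto (fun t : ℝ => (f (x + t • h) - f x) / t) (𝓝[>] (0 : ℝ)) (𝓝 (f' h))

/-- `[A, B]` is a quasidifferential of `f : ℝⁿ → ℝ` at `x` (with the Euclidean pairing),
with Dini directional derivative `f'`. -/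
def IsQuasidiffE {n : ℕ} (f : EuclideanSpace ℝ (Fin n) → ℝ) (x : EuclideanSpace ℝ (Fin n))
    (f' : EuclideanSpace ℝ (Fin n) → ℝ) (A B : Set (EuclideanSpace ℝ (Fin n))) : Prop :=
  A.Nonempty ∧ B.Nonempty ∧ Convex ℝ A ∧ Convex ℝ B ∧ IsCompact A ∧ IsCompact B ∧
    HasDiniDerivE f x f' ∧
    ∀ h, f' h = sSup ((fun v => ⟪v, h⟫) '' A) + sInf ((fun w => ⟪w, h⟫) '' B)

/-- if every `l×n` matrix whose rows are chosen from the quasidifferential sums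
of the components of `F = (f₁,…,f_l)` at `(xb, pb)` has full rank `l ≤ n` (i.e. the chosen
rows are always linearly independent), then `F(·,p)` is metrically regular near
`(xb, F(xb,p))` with a uniform norm bound `K` for all `p` near `pb`. -/
lemma sep_lemma {n : ℕ} {Q : Set (EuclideanSpace ℝ (Fin n))} (hconv : Convex ℝ Q)
    (hcomp : IsCompact Q) (hne : Q.Nonempty) {σ : ℝ} (hσ : 0 < σ)
    (hlb : ∀ q ∈ Q, σ ≤ ‖q‖) :
    ∃ h : EuclideanSpace ℝ (Fin n), ‖h‖ = 1 ∧ ∀ q ∈ Q, ⟪q, h⟫ ≤ -σ := by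
  obtain ⟨q₀, hq₀Q, hmin⟩ := hcomp.exists_isMinOn hne continuous_norm.continuousOn
  have hq₀σ : σ ≤ ‖q₀‖ := hlb _ hq₀Q
  have hq₀pos : 0 < ‖q₀‖ := lt_of_lt_of_le hσ hq₀σ
  have key : ∀ q ∈ Q, ‖q₀‖ ^ 2 ≤ ⟪q, q₀⟫ := by
    intro q hq
    by_contra hlt
    push_neg at hlt
    set u := q - q₀ with hu
    have hinner : ⟪q₀, u⟫ = ⟪q, q₀⟫ - ‖q₀‖ ^ 2 := by
      rw [hu, inner_sub_right, real_inner_comm, real_inner_self_eq_norm_sq]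
    have ha : 0 < ‖q₀‖ ^ 2 - ⟪q, q₀⟫ := by linarith
    have hune : u ≠ 0 := by
      intro h0
      have : q = q₀ := by rwa [hu, sub_eq_zero] at h0
      rw [this, real_inner_self_eq_norm_sq] at hlt; linarith
    have hupos : 0 < ‖u‖ ^ 2 := pow_pos (norm_pos_iff.mpr hune) 2
    set a := ‖q₀‖ ^ 2 - ⟪q, q₀⟫ with hadef
    set t := min 1 (a / ‖u‖ ^ 2) with ht
    have ht0 : 0 < t := lt_min one_pos (div_pos ha hupos)
    have ht1 : t ≤ 1 := min_le_left _ _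
    have htu : t * ‖u‖ ^ 2 ≤ a := by
      calc t * ‖u‖ ^ 2 ≤ (a / ‖u‖ ^ 2) * ‖u‖ ^ 2 := by
            apply mul_le_mul_of_nonneg_right (min_le_right _ _) (le_of_lt hupos)
        _ = a := by field_simp
    have hz : q₀ + t • u ∈ Q := by
      have : q₀ + t • u = (1 - t) • q₀ + t • q := by
        rw [hu]; module
      rw [this]
      exact hconv hq₀Q hq (by linarith) (le_of_lt ht0) (by ring)
    have hexp : ‖q₀ + t • u‖ ^ 2 = ‖q₀‖ ^ 2 + 2 * (t * ⟪q₀, u⟫) + t ^ 2 * ‖u‖ ^ 2 := by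
      rw [norm_add_sq_real, real_inner_smul_right, norm_smul]
      simp [abs_of_pos ht0, mul_pow]
    have hge : ‖q₀‖ ≤ ‖q₀ + t • u‖ := hmin hz
    have hge2 : ‖q₀‖ ^ 2 ≤ ‖q₀ + t • u‖ ^ 2 := by
      apply pow_le_pow_left₀ (norm_nonneg _) hge
    nlinarith [hexp, hinner, htu, ht0, mul_pos ht0 ha]
  refine ⟨-(‖q₀‖⁻¹ • q₀), ?_, ?_⟩
  · rw [norm_neg, norm_smul]
    simp [abs_of_pos (inv_pos.mpr hq₀pos), inv_mul_cancel₀ (ne_of_gt hq₀pos)]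
  · intro q hq
    rw [inner_neg_right, real_inner_smul_right]
    have h1 : ‖q₀‖ ≤ ‖q₀‖⁻¹ * ⟪q, q₀⟫ := by
      calc ‖q₀‖ = ‖q₀‖⁻¹ * ‖q₀‖ ^ 2 := by field_simp [pow_two]
        _ ≤ ‖q₀‖⁻¹ * ⟪q, q₀⟫ :=
            mul_le_mul_of_nonneg_left (key q hq) (inv_nonneg.mpr (norm_nonneg _))
    linarith

lemma dini_norm {n l : ℕ} (F : EuclideanSpace ℝ (Fin n) → EuclideanSpace ℝ (Fin l))
    (x h : EuclideanSpace ℝ (Fin n)) (y D : EuclideanSpace ℝ (Fin l))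
    (hD : Tendsto (fun t : ℝ => t⁻¹ • (F (x + t • h) - F x)) (𝓝[>] (0:ℝ)) (𝓝 D))
    (hne : y - F x ≠ 0) :
    Tendsto (fun t : ℝ => (‖y - F (x + t • h)‖ - ‖y - F x‖) / t) (𝓝[>] (0:ℝ))
      (𝓝 (⟪F x - y, D⟫ / ‖y - F x‖)) := by
  set a := y - F x with hadef
  have hapos : 0 < ‖a‖ := norm_pos_iff.mpr hne
  set V : ℝ → EuclideanSpace ℝ (Fin l) := fun t => t⁻¹ • (F (x + t • h) - F x) with hV
  have htend0 : Tendsto (fun t : ℝ => t • V t) (𝓝[>] (0:ℝ)) (𝓝 0) := by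
    have h0 : Tendsto (fun t : ℝ => t • V t) (𝓝[>] (0:ℝ)) (𝓝 ((0:ℝ) • D)) :=
      Tendsto.smul (tendsto_nhdsWithin_of_tendsto_nhds tendsto_id) hD
    simpa using h0
  have hsub : Tendsto (fun t : ℝ => a - t • V t) (𝓝[>] (0:ℝ)) (𝓝 a) := by
    simpa using (tendsto_const_nhds (x := a)).sub htend0
  have hden : Tendsto (fun t : ℝ => ‖a - t • V t‖ + ‖a‖) (𝓝[>] (0:ℝ)) (𝓝 (‖a‖ + ‖a‖)) :=
    (hsub.norm).add tendsto_const_nhds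
  have hnum : Tendsto (fun t : ℝ => -2 * ⟪a, V t⟫ + t * ‖V t‖ ^ 2) (𝓝[>] (0:ℝ))
      (𝓝 (-2 * ⟪a, D⟫)) := by
    have h1 : Tendsto (fun t : ℝ => -2 * ⟪a, V t⟫) (𝓝[>] (0:ℝ)) (𝓝 (-2 * ⟪a, D⟫)) :=
      tendsto_const_nhds.mul (tendsto_const_nhds.inner hD)
    have h2 : Tendsto (fun t : ℝ => t * ‖V t‖ ^ 2) (𝓝[>] (0:ℝ)) (𝓝 (0 * ‖D‖ ^ 2)) :=
      (tendsto_nhdsWithin_of_tendsto_nhds tendsto_id).mul ((hD.norm).pow 2)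
    simpa using h1.add h2
  have hg : Tendsto (fun t : ℝ => (-2 * ⟪a, V t⟫ + t * ‖V t‖ ^ 2) / (‖a - t • V t‖ + ‖a‖))
      (𝓝[>] (0:ℝ)) (𝓝 (-2 * ⟪a, D⟫ / (‖a‖ + ‖a‖))) := hnum.div hden (by positivity)
  have heq : ∀ᶠ t in 𝓝[>] (0:ℝ),
      (-2 * ⟪a, V t⟫ + t * ‖V t‖ ^ 2) / (‖a - t • V t‖ + ‖a‖)
        = (‖y - F (x + t • h)‖ - ‖y - F x‖) / t := by
    filter_upwards [self_mem_nhdsWithin] with t ht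
    have ht0 : (0:ℝ) < t := ht
    have hFt : y - F (x + t • h) = a - t • V t := by
      rw [hV, hadef, smul_smul, mul_inv_cancel₀ ht0.ne', one_smul]; abel
    have hdenpos : 0 < ‖a - t • V t‖ + ‖a‖ := by positivity
    have hsq : ‖a - t • V t‖ ^ 2 = ‖a‖ ^ 2 - 2 * (t * ⟪a, V t⟫) + t ^ 2 * ‖V t‖ ^ 2 := by
      rw [norm_sub_sq_real, real_inner_smul_right, norm_smul]
      rw [Real.norm_eq_abs, abs_of_pos ht0, mul_pow]
    rw [hFt, ← hadef, div_eq_div_iff hdenpos.ne' ht0.ne']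
    nlinarith [hsq]
  have := hg.congr' heq
  convert this using 2
  rw [hadef]
  have hfy : ⟪F x - y, D⟫ = ⟪-(y - F x), D⟫ := by rw [neg_sub]
  rw [hfy, inner_neg_left]
  field_simp
  ring

lemma tendsto_euclidean {l : ℕ} {α : Type*} {f : Filter α} (g : Fin l → α → ℝ)
    (d : EuclideanSpace ℝ (Fin l)) (hg : ∀ j, Tendsto (g j) f (𝓝 (d j))) :
    Tendsto (fun t => (WithLp.toLp 2 (fun j => g j t) : EuclideanSpace ℝ (Fin l))) f (𝓝 d) := by
  have h1 : Tendsto (fun t => (fun j => g j t : Fin l → ℝ)) f (𝓝 (fun j => d j)) :=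
    tendsto_pi_nhds.mpr fun j => hg j
  have h2 := ((PiLp.continuous_toLp 2 (fun _ : Fin l => ℝ)).tendsto _).comp h1
  exact h2

lemma exists_max_inner {n : ℕ} {A : Set (EuclideanSpace ℝ (Fin n))} (hA : IsCompact A)
    (hne : A.Nonempty) (h : EuclideanSpace ℝ (Fin n)) :
    ∃ v ∈ A, sSup ((fun v => ⟪v, h⟫) '' A) = ⟪v, h⟫ := by
  obtain ⟨v, hv, hmax⟩ := hA.exists_isMaxOn (f := fun v => ⟪v, h⟫) hne
    ((continuous_id.inner continuous_const).continuousOn)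
  refine ⟨v, hv, IsGreatest.csSup_eq ⟨⟨v, hv, rfl⟩, ?_⟩⟩
  rintro z ⟨w, hw, rfl⟩
  exact hmax hw

lemma exists_min_inner {n : ℕ} {A : Set (EuclideanSpace ℝ (Fin n))} (hA : IsCompact A)
    (hne : A.Nonempty) (h : EuclideanSpace ℝ (Fin n)) :
    ∃ v ∈ A, sInf ((fun v => ⟪v, h⟫) '' A) = ⟪v, h⟫ := by
  obtain ⟨v, hv, hmin⟩ := hA.exists_isMinOn (f := fun v => ⟪v, h⟫) hne
    ((continuous_id.inner continuous_const).continuousOn)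
  refine ⟨v, hv, IsLeast.csInf_eq ⟨⟨v, hv, rfl⟩, ?_⟩⟩
  rintro z ⟨w, hw, rfl⟩
  exact hmin hw

lemma abs_coord_le_norm {l : ℕ} (η : EuclideanSpace ℝ (Fin l)) (j : Fin l) :
    |η j| ≤ ‖η‖ := by
  have := EuclideanSpace.norm_eq η
  rw [this]
  have h1 : ‖η j‖ ^ 2 ≤ ∑ i, ‖η i‖ ^ 2 :=
    Finset.single_le_sum (f := fun i => ‖η i‖ ^ 2) (fun i _ => by positivity) (Finset.mem_univ j)
  calc |η j| = Real.sqrt (‖η j‖ ^ 2) := by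
        rw [Real.sqrt_sq_eq_abs, Real.norm_eq_abs, abs_abs]
    _ ≤ Real.sqrt (∑ i, ‖η i‖ ^ 2) := Real.sqrt_le_sqrt h1

lemma continuous_euclidean {l : ℕ} {α : Type*} [TopologicalSpace α] (g : Fin l → α → ℝ)
    (hg : ∀ j, Continuous (g j)) :
    Continuous (fun t => (WithLp.toLp 2 (fun j => g j t) : EuclideanSpace ℝ (Fin l))) :=
  (PiLp.continuous_toLp 2 (fun _ : Fin l => ℝ)).comp (continuous_pi hg)

/-- The linear selection-sum map. -/
noncomputable def sumMapL {n l : ℕ} (η : EuclideanSpace ℝ (Fin l)) :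
    ((Fin l → EuclideanSpace ℝ (Fin n)) × (Fin l → EuclideanSpace ℝ (Fin n))) →ₗ[ℝ]
      EuclideanSpace ℝ (Fin n) where
  toFun vw := ∑ j, η j • (vw.1 j + vw.2 j)
  map_add' a b := by
    simp only [Prod.fst_add, Prod.snd_add, Pi.add_apply]
    rw [← Finset.sum_add_distrib]
    refine Finset.sum_congr rfl fun j _ => ?_
    rw [← smul_add]
    congr 1
    abel
  map_smul' c a := by
    simp only [Prod.smul_fst, Prod.smul_snd, Pi.smul_apply, RingHom.id_apply]
    rw [Finset.smul_sum]
    refine Finset.sum_congr rfl fun j _ => ?_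
    rw [← smul_add, smul_comm c (η j)]

lemma sumMapL_apply {n l : ℕ} (η : EuclideanSpace ℝ (Fin l))
    (vw : (Fin l → EuclideanSpace ℝ (Fin n)) × (Fin l → EuclideanSpace ℝ (Fin n))) :
    sumMapL η vw = ∑ j, η j • (vw.1 j + vw.2 j) := rfl

set_option maxHeartbeats 2000000 in
theorem full_rank_quasidiff_sum_implies_metric_regularity
    (n l : ℕ) (hln : l ≤ n) {P : Type*} [MetricSpace P]
    (f : Fin l → EuclideanSpace ℝ (Fin n) → P → ℝ)
    (hfcont : ∀ j, Continuous fun q : EuclideanSpace ℝ (Fin n) × P => f j q.1 q.2)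
    (xb : EuclideanSpace ℝ (Fin n)) (pb : P)
    (U : Set (EuclideanSpace ℝ (Fin n) × P)) (hU : U ∈ 𝓝 (xb, pb))
    (df : Fin l → EuclideanSpace ℝ (Fin n) → P → EuclideanSpace ℝ (Fin n) → ℝ)
    (A B : Fin l → EuclideanSpace ℝ (Fin n) → P → Set (EuclideanSpace ℝ (Fin n)))
    (hquasi : ∀ j, ∀ q ∈ U,
      IsQuasidiffE (fun x => f j x q.2) q.1 (df j q.1 q.2) (A j q.1 q.2) (B j q.1 q.2))
    (hosc : ∀ j,
      (∀ V : Set (EuclideanSpace ℝ (Fin n)), IsOpen V → A j xb pb ⊆ V →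
        ∃ δ > (0 : ℝ), ∀ x p, dist (x, p) (xb, pb) < δ → A j x p ⊆ V) ∧
      (∀ V : Set (EuclideanSpace ℝ (Fin n)), IsOpen V → B j xb pb ⊆ V →
        ∃ δ > (0 : ℝ), ∀ x p, dist (x, p) (xb, pb) < δ → B j x p ⊆ V))
    (hrank : ∀ v w : Fin l → EuclideanSpace ℝ (Fin n),
      (∀ j, v j ∈ A j xb pb) → (∀ j, w j ∈ B j xb pb) →
      LinearIndependent ℝ (fun j => v j + w j)) :
    ∃ K > (0 : ℝ), ∃ δ > (0 : ℝ), ∀ p : P, dist p pb < δ →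
      ∃ r > (0 : ℝ), ∀ x : EuclideanSpace ℝ (Fin n), ‖x - xb‖ ≤ r →
        ∀ y : EuclideanSpace ℝ (Fin l),
          ‖y - (show EuclideanSpace ℝ (Fin l) from WithLp.toLp 2 (fun j => f j xb p))‖ ≤ r →
          EMetric.infEdist x {ξ : EuclideanSpace ℝ (Fin n) | ∀ j, f j ξ p = y j} ≤
            ENNReal.ofReal (K * ‖y - (show EuclideanSpace ℝ (Fin l) from WithLp.toLp 2 (fun j => f j x p))‖) := by
  classical
  rcases Nat.eq_zero_or_pos l with hl0 | hlpos
  · subst hl0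
    refine ⟨1, one_pos, 1, one_pos, fun p _ => ⟨1, one_pos, fun x _ y _ => ?_⟩⟩
    have hmem : x ∈ {ξ : EuclideanSpace ℝ (Fin n) | ∀ j, f j ξ p = y j} :=
      fun j => j.elim0
    calc EMetric.infEdist x {ξ : EuclideanSpace ℝ (Fin n) | ∀ j, f j ξ p = y j}
        ≤ edist x x := EMetric.infEdist_le_edist_of_mem hmem
      _ = 0 := edist_self x
      _ ≤ _ := zero_le
  -- main case
  have hUmem : (xb, pb) ∈ U := mem_of_mem_nhds hU
  have hbase := fun j => hquasi j (xb, pb) hUmem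
  -- the function g and the constant σ₀
  set g : EuclideanSpace ℝ (Fin l) × (Fin l → EuclideanSpace ℝ (Fin n)) × (Fin l → EuclideanSpace ℝ (Fin n)) → EuclideanSpace ℝ (Fin n) :=
    fun z => ∑ j, z.1 j • (z.2.1 j + z.2.2 j) with hg
  have hgcont : Continuous g := by
    apply continuous_finset_sum
    intro j _
    exact ((PiLp.continuous_apply 2 _ j).comp continuous_fst).smul
      (((continuous_apply j).comp (continuous_fst.comp continuous_snd)).add
        ((continuous_apply j).comp (continuous_snd.comp continuous_snd)))
  set K₀ : Set (EuclideanSpace ℝ (Fin l) × (Fin l → EuclideanSpace ℝ (Fin n)) × (Fin l → EuclideanSpace ℝ (Fin n))) :=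
    (Metric.sphere (0 : EuclideanSpace ℝ (Fin l)) 1) ×ˢ ((Set.univ.pi fun j => A j xb pb) ×ˢ
      (Set.univ.pi fun j => B j xb pb)) with hK₀
  have hK₀comp : IsCompact K₀ := by
    refine (isCompact_sphere _ _).prod (IsCompact.prod ?_ ?_)
    · exact isCompact_univ_pi fun j => (hbase j).2.2.2.2.1
    · exact isCompact_univ_pi fun j => (hbase j).2.2.2.2.2.1
  have hK₀ne : K₀.Nonempty := by
    have hsne : (Metric.sphere (0 : EuclideanSpace ℝ (Fin l)) 1).Nonempty := by
      refine ⟨EuclideanSpace.single ⟨0, hlpos⟩ (1 : ℝ), ?_⟩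
      simp [EuclideanSpace.norm_single]
    obtain ⟨η₀, hη₀⟩ := hsne
    refine ⟨(η₀, fun j => ((hbase j).1).some, fun j => ((hbase j).2.1).some), hη₀, ?_, ?_⟩
    · exact fun j _ => ((hbase j).1).some_mem
    · exact fun j _ => ((hbase j).2.1).some_mem
  obtain ⟨z₀, hz₀K, hz₀min⟩ := hK₀comp.exists_isMinOn hK₀ne
    (continuous_norm.comp hgcont).continuousOn
  set σ₀ : ℝ := ‖g z₀‖ with hσ₀
  have hσ₀pos : 0 < σ₀ := by
    rcases hz₀K with ⟨hsph, hv, hw⟩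
    have hne : g z₀ ≠ 0 := by
      intro h0
      have hli := hrank z₀.2.1 z₀.2.2 (fun j => hv j (Set.mem_univ j))
        (fun j => hw j (Set.mem_univ j))
      have hall := Fintype.linearIndependent_iff.mp hli z₀.1 h0
      have : z₀.1 = 0 := by ext j; exact hall j
      rw [Metric.mem_sphere, dist_zero_right, this, norm_zero] at hsph
      exact one_ne_zero hsph.symm
    exact norm_pos_iff.mpr hne
  -- constants
  set ε : ℝ := σ₀ / (4 * l) with hεdef
  have hlR : (0:ℝ) < l := by exact_mod_cast hlpos
  have hεpos : 0 < ε := by positivity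
  set σ : ℝ := σ₀ / 2 with hσdef
  have hσpos : 0 < σ := by positivity
  set lam : ℝ := σ / 2 with hlamdef
  have hlampos : 0 < lam := by positivity
  set K : ℝ := 1 / lam with hKdef
  have hKpos : 0 < K := by positivity
  -- stage 1 neighborhood
  have hevA : ∀ j, ∀ᶠ q in 𝓝 (xb, pb),
      A j q.1 q.2 ⊆ Metric.thickening ε (A j xb pb) := by
    intro j
    obtain ⟨δ, hδpos, H⟩ := (hosc j).1 _ Metric.isOpen_thickening
      (Metric.self_subset_thickening hεpos _)
    filter_upwards [Metric.ball_mem_nhds (xb, pb) hδpos] with q hq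
    exact H q.1 q.2 (by simpa using hq)
  have hevB : ∀ j, ∀ᶠ q in 𝓝 (xb, pb),
      B j q.1 q.2 ⊆ Metric.thickening ε (B j xb pb) := by
    intro j
    obtain ⟨δ, hδpos, H⟩ := (hosc j).2 _ Metric.isOpen_thickening
      (Metric.self_subset_thickening hεpos _)
    filter_upwards [Metric.ball_mem_nhds (xb, pb) hδpos] with q hq
    exact H q.1 q.2 (by simpa using hq)
  have hUev : ∀ᶠ q in 𝓝 (xb, pb), q ∈ U := hU
  have hG1 : ∀ᶠ q in 𝓝 (xb, pb), q ∈ U ∧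
      (∀ j, A j q.1 q.2 ⊆ Metric.thickening ε (A j xb pb)) ∧
      (∀ j, B j q.1 q.2 ⊆ Metric.thickening ε (B j xb pb)) :=
    hUev.and ((eventually_all.mpr hevA).and (eventually_all.mpr hevB))
  obtain ⟨ρ', hρ'pos, hρ'⟩ := Metric.mem_nhds_iff.mp hG1
  set ρ : ℝ := ρ' / 2 with hρdef
  have hρpos : 0 < ρ := by positivity
  -- stage 2 neighborhood
  set Fbig : EuclideanSpace ℝ (Fin n) × P → EuclideanSpace ℝ (Fin l) :=
    fun q => WithLp.toLp 2 (fun j => f j q.1 q.2) with hFbigdef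
  have hFmcont : Continuous Fbig := continuous_euclidean _ hfcont
  set c' : ℝ := ρ / (8 * K) with hc'def
  have hc'pos : 0 < c' := by positivity
  have hev2 : ∀ᶠ q in 𝓝 (xb, pb), ‖Fbig q - Fbig (xb, pb)‖ < c' := by
    have h2 := (hFmcont.tendsto (xb, pb)) (Metric.ball_mem_nhds _ hc'pos)
    filter_upwards [h2] with q hq
    rw [← dist_eq_norm]
    exact hq
  obtain ⟨ρ''₀, hρ''₀pos, hρ''₀⟩ := Metric.mem_nhds_iff.mp hev2
  set ρ'' : ℝ := min ρ''₀ ρ' with hρ''def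
  have hρ''pos : 0 < ρ'' := lt_min hρ''₀pos hρ'pos
  refine ⟨K, hKpos, ρ'' / 2, by positivity, fun p hp => ?_⟩
  set r : ℝ := min (ρ'' / 2) (ρ / (4 * (K + 1))) with hrdef
  have hrpos : 0 < r := lt_min (by positivity) (by positivity)
  refine ⟨r, hrpos, fun x hx y hy => ?_⟩
  -- notation for this p
  set Fmp : EuclideanSpace ℝ (Fin n) → EuclideanSpace ℝ (Fin l) :=
    fun ξ => Fbig (ξ, p) with hFmpdef
  have hFmpcont : Continuous Fmp :=
    hFmcont.comp (continuous_id.prodMk continuous_const)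
  have hy' : ‖y - Fmp xb‖ ≤ r := hy
  set φ : EuclideanSpace ℝ (Fin n) → ℝ := fun ξ => ‖y - Fmp ξ‖ with hφdef
  have hφcont : Continuous φ := (continuous_const.sub hFmpcont).norm
  have hpρ'' : dist p pb < ρ'' := lt_of_lt_of_le hp (by linarith)
  have hrρ4 : r ≤ ρ / (4 * (K + 1)) := min_le_right _ _
  have hrρ : r ≤ ρ := le_trans hrρ4 (by
    apply div_le_self hρpos.le
    linarith)
  have hKr : (K + 1) * r ≤ ρ / 4 := by
    have h4 : 0 < 4 * (K + 1) := by positivity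
    calc (K + 1) * r ≤ (K + 1) * (ρ / (4 * (K + 1))) :=
          mul_le_mul_of_nonneg_left hrρ4 (by positivity)
      _ = ρ / 4 := by field_simp
  have h2Kc' : 2 * K * c' = ρ / 4 := by
    rw [hc'def]; field_simp; ring
  -- stage-2 estimate
  have hstage2 : ∀ ξ : EuclideanSpace ℝ (Fin n), ‖ξ - xb‖ < ρ'' →
      ‖Fmp ξ - Fbig (xb, pb)‖ < c' := by
    intro ξ hξ
    have hmem : (ξ, p) ∈ Metric.ball (xb, pb) ρ''₀ := by
      rw [Metric.mem_ball, Prod.dist_eq, max_lt_iff]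
      refine ⟨?_, ?_⟩
      · rw [dist_eq_norm]; exact lt_of_lt_of_le hξ (min_le_left _ _)
      · exact lt_of_lt_of_le hpρ'' (min_le_left _ _)
    exact hρ''₀ hmem
  have hφx_bound : φ x ≤ r + 2 * c' := by
    have hxρ'' : ‖x - xb‖ < ρ'' := lt_of_le_of_lt (le_trans hx (min_le_left _ _)) (by linarith)
    have ha := hstage2 x hxρ''
    have hb := hstage2 xb (by simpa using hρ''pos)
    have htri1 : ‖Fmp xb - Fmp x‖ ≤
        ‖Fmp xb - Fbig (xb, pb)‖ + ‖Fbig (xb, pb) - Fmp x‖ := by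
      rw [← dist_eq_norm, ← dist_eq_norm, ← dist_eq_norm]
      exact dist_triangle _ _ _
    rw [norm_sub_rev (Fbig (xb, pb)) (Fmp x)] at htri1
    have htri2 : φ x ≤ ‖y - Fmp xb‖ + ‖Fmp xb - Fmp x‖ := by
      show ‖y - Fmp x‖ ≤ _
      rw [← dist_eq_norm, ← dist_eq_norm, ← dist_eq_norm]
      exact dist_triangle _ _ _
    linarith
  have hKφr : K * φ x + r ≤ ρ / 2 := by
    have hb1 : K * φ x ≤ K * (r + 2 * c') := mul_le_mul_of_nonneg_left hφx_bound hKpos.le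
    have hb2 : K * (r + 2 * c') = K * r + 2 * K * c' := by ring
    have hb3 : (K + 1) * r = K * r + r := by ring
    linarith
  -- minimization of the penalized functional
  set ψ : EuclideanSpace ℝ (Fin n) → ℝ := fun ξ => φ ξ + lam * ‖ξ - x‖ with hψdef
  have hψcont : Continuous ψ :=
    hφcont.add (continuous_const.mul ((continuous_id.sub continuous_const).norm))
  obtain ⟨xh, hxhD, hxhmin⟩ := (isCompact_closedBall xb ρ).exists_isMinOn
    ⟨xb, Metric.mem_closedBall_self hρpos.le⟩ hψcont.continuousOn
  have hxD : x ∈ Metric.closedBall xb ρ := by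
    rw [Metric.mem_closedBall, dist_eq_norm]; exact le_trans hx hrρ
  have hψle : φ xh + lam * ‖xh - x‖ ≤ φ x := by
    have h1 := hxhmin hxD
    simpa [hψdef] using h1
  have hφxh0 : 0 ≤ φ xh := norm_nonneg _
  have hdist_xh_x : ‖xh - x‖ ≤ K * φ x := by
    have h1 : lam * ‖xh - x‖ ≤ φ x := by linarith
    have h2 : ‖xh - x‖ ≤ φ x / lam := (le_div_iff₀' hlampos).mpr h1
    calc ‖xh - x‖ ≤ φ x / lam := h2
      _ = K * φ x := by rw [hKdef]; ring
  have hxhlt : ‖xh - xb‖ ≤ ρ / 2 := by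
    calc ‖xh - xb‖ ≤ ‖xh - x‖ + ‖x - xb‖ := by
          rw [← dist_eq_norm, ← dist_eq_norm, ← dist_eq_norm]; exact dist_triangle _ _ _
      _ ≤ K * φ x + r := add_le_add hdist_xh_x hx
      _ ≤ ρ / 2 := hKφr
  have hek : ∀ ξ ∈ Metric.closedBall xb ρ, φ xh ≤ φ ξ + lam * ‖ξ - xh‖ := by
    intro ξ hξ
    have h1 := hxhmin hξ
    simp only [hψdef] at h1
    have h1' : φ xh + lam * ‖xh - x‖ ≤ φ ξ + lam * ‖ξ - x‖ := h1
    have h2 : ‖ξ - x‖ ≤ ‖ξ - xh‖ + ‖xh - x‖ := by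
      rw [← dist_eq_norm, ← dist_eq_norm, ← dist_eq_norm]; exact dist_triangle _ _ _
    have h3 : lam * ‖ξ - x‖ ≤ lam * ‖ξ - xh‖ + lam * ‖xh - x‖ := by
      rw [← mul_add]; exact mul_le_mul_of_nonneg_left h2 hlampos.le
    linarith
  -- the Ekeland point solves the equation
  have hsol : Fmp xh = y := by
    by_contra hne0
    have hane : y - Fmp xh ≠ 0 := fun h0 => hne0 (by rw [sub_eq_zero] at h0; exact h0.symm)
    have hapos : 0 < ‖y - Fmp xh‖ := norm_pos_iff.mpr hane
    have hgood : (xh, p) ∈ Metric.ball (xb, pb) ρ' := by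
      rw [Metric.mem_ball, Prod.dist_eq, max_lt_iff]
      refine ⟨?_, ?_⟩
      · rw [dist_eq_norm]
        calc ‖xh - xb‖ ≤ ρ / 2 := hxhlt
          _ < ρ' := by rw [hρdef]; linarith
      · calc dist p pb < ρ'' / 2 := hp
          _ ≤ ρ' := by
            have := min_le_right ρ''₀ ρ'
            rw [hρ''def]
            linarith [this, hρ'pos]
    obtain ⟨hUxh, hAin, hBin⟩ := hρ' hgood
    have hq := fun j => hquasi j (xh, p) hUxh
    set η : EuclideanSpace ℝ (Fin l) := ‖y - Fmp xh‖⁻¹ • (Fmp xh - y) with hηdef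
    have hηnorm : ‖η‖ = 1 := by
      rw [hηdef, norm_smul, norm_sub_rev (Fmp xh) y]
      simp [abs_of_pos (inv_pos.mpr hapos), inv_mul_cancel₀ hapos.ne']
    set Q : Set (EuclideanSpace ℝ (Fin n)) :=
      (sumMapL η) '' ((Set.univ.pi fun j => A j xh p) ×ˢ (Set.univ.pi fun j => B j xh p))
      with hQdef
    have hQconv : Convex ℝ Q :=
      Convex.linear_image (Convex.prod (convex_pi fun j _ => (hq j).2.2.1)
        (convex_pi fun j _ => (hq j).2.2.2.1)) _
    have hQcomp : IsCompact Q :=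
      ((isCompact_univ_pi fun j => (hq j).2.2.2.2.1).prod
        (isCompact_univ_pi fun j => (hq j).2.2.2.2.2.1)).image
        (sumMapL η).continuous_of_finiteDimensional
    have hQne : Q.Nonempty :=
      ⟨sumMapL η (fun j => ((hq j).1).some, fun j => ((hq j).2.1).some),
        Set.mem_image_of_mem _ ⟨fun j _ => ((hq j).1).some_mem,
          fun j _ => ((hq j).2.1).some_mem⟩⟩
    have hQlb : ∀ q ∈ Q, σ ≤ ‖q‖ := by
      rintro q ⟨⟨v, w⟩, ⟨hv, hw⟩, rfl⟩
      choose v₀ hv₀mem hv₀d using fun j =>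
        Metric.mem_thickening_iff.mp (hAin j (hv j (Set.mem_univ j)))
      choose w₀ hw₀mem hw₀d using fun j =>
        Metric.mem_thickening_iff.mp (hBin j (hw j (Set.mem_univ j)))
      have hK₀mem : (η, v₀, w₀) ∈ K₀ :=
        ⟨by rw [Metric.mem_sphere, dist_zero_right]; exact hηnorm,
          fun j _ => hv₀mem j, fun j _ => hw₀mem j⟩
      have hbase_lb : σ₀ ≤ ‖g (η, v₀, w₀)‖ := hz₀min hK₀mem
      set err : EuclideanSpace ℝ (Fin n) := ∑ j, η j • ((v j - v₀ j) + (w j - w₀ j))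
        with herrdef
      have hsplit : sumMapL η (v, w) = g (η, v₀, w₀) + err := by
        rw [sumMapL_apply, hg, herrdef]
        rw [← Finset.sum_add_distrib]
        refine Finset.sum_congr rfl fun j _ => ?_
        rw [← smul_add]
        congr 1
        abel
      have herr : ‖err‖ ≤ σ₀ / 2 := by
        have hterm : ∀ j : Fin l, ‖η j • ((v j - v₀ j) + (w j - w₀ j))‖ ≤ ε + ε := by
          intro j
          rw [norm_smul]
          have h1 : ‖η j‖ ≤ 1 := by
            rw [Real.norm_eq_abs]
            rw [← hηnorm]
            exact abs_coord_le_norm η j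
          have h2 : ‖(v j - v₀ j) + (w j - w₀ j)‖ ≤ ε + ε := by
            calc ‖(v j - v₀ j) + (w j - w₀ j)‖ ≤ ‖v j - v₀ j‖ + ‖w j - w₀ j‖ :=
                  norm_add_le _ _
              _ ≤ ε + ε := by
                  have ha := hv₀d j
                  have hb := hw₀d j
                  rw [dist_eq_norm] at ha hb
                  exact add_le_add ha.le hb.le
          calc ‖η j‖ * ‖(v j - v₀ j) + (w j - w₀ j)‖ ≤ 1 * (ε + ε) :=
                mul_le_mul h1 h2 (norm_nonneg _) one_pos.le
            _ = ε + ε := one_mul _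
        calc ‖err‖ ≤ ∑ j : Fin l, ‖η j • ((v j - v₀ j) + (w j - w₀ j))‖ := by
              rw [herrdef]; exact norm_sum_le _ _
          _ ≤ ∑ _j : Fin l, (ε + ε) := Finset.sum_le_sum fun j _ => hterm j
          _ = l * (ε + ε) := by rw [Finset.sum_const]; simp [mul_comm, mul_add]
          _ = σ₀ / 2 := by rw [hεdef]; field_simp; ring
      have hlow : σ₀ - σ₀ / 2 ≤ ‖g (η, v₀, w₀) + err‖ := by
        have h3 : ‖g (η, v₀, w₀)‖ ≤ ‖g (η, v₀, w₀) + err‖ + ‖err‖ := by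
          have h4 := norm_add_le (g (η, v₀, w₀) + err) (-err)
          simpa using h4
        linarith
      rw [hsplit]
      calc σ = σ₀ - σ₀ / 2 := by rw [hσdef]; ring
        _ ≤ ‖g (η, v₀, w₀) + err‖ := hlow
    obtain ⟨h, hhnorm, hsep⟩ := sep_lemma hQconv hQcomp hQne hσpos hQlb
    have hext : ∀ j, ∃ vj ∈ A j xh p, ∃ wj ∈ B j xh p,
        df j xh p h = ⟪vj, h⟫ + ⟪wj, h⟫ := by
      intro j
      obtain ⟨vj, hvj, hvS⟩ := exists_max_inner (hq j).2.2.2.2.1 (hq j).1 h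
      obtain ⟨wj, hwj, hwS⟩ := exists_min_inner (hq j).2.2.2.2.2.1 (hq j).2.1 h
      exact ⟨vj, hvj, wj, hwj, by rw [(hq j).2.2.2.2.2.2.2 h, hvS, hwS]⟩
    choose vs hvs ws hws hdfeq using hext
    have hqstar : ∑ j, η j * df j xh p h ≤ -σ := by
      have hmem : sumMapL η (vs, ws) ∈ Q :=
        Set.mem_image_of_mem _ ⟨fun j _ => hvs j, fun j _ => hws j⟩
      have hs := hsep _ hmem
      calc ∑ j, η j * df j xh p h = ⟪sumMapL η (vs, ws), h⟫ := by
            rw [sumMapL_apply, sum_inner]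
            refine Finset.sum_congr rfl fun j _ => ?_
            rw [real_inner_smul_left, hdfeq j, inner_add_left]
        _ ≤ -σ := hs
    have hD : Tendsto (fun t : ℝ => t⁻¹ • (Fmp (xh + t • h) - Fmp xh)) (𝓝[>] (0:ℝ))
        (𝓝 (WithLp.toLp 2 (fun j => df j xh p h) : EuclideanSpace ℝ (Fin l))) := by
      have heqf : (fun t : ℝ => t⁻¹ • (Fmp (xh + t • h) - Fmp xh))
          = fun t => (WithLp.toLp 2 (fun j => (f j (xh + t • h) p - f j xh p) / t) :
              EuclideanSpace ℝ (Fin l)) := by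
        funext t
        ext j
        simp [hFmpdef, hFbigdef, div_eq_inv_mul]
      rw [heqf]
      exact tendsto_euclidean _ _ (fun j => (hq j).2.2.2.2.2.2.1 h)
    have hlim := dini_norm Fmp xh h y (WithLp.toLp 2 (fun j => df j xh p h) : EuclideanSpace ℝ (Fin l))
      hD hane
    have hlimval : ⟪Fmp xh - y, (WithLp.toLp 2 (fun j => df j xh p h) : EuclideanSpace ℝ (Fin l))⟫ /
        ‖y - Fmp xh‖ = ∑ j, η j * df j xh p h := by
      rw [PiLp.inner_apply, div_eq_inv_mul, Finset.mul_sum]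
      refine Finset.sum_congr rfl fun j _ => ?_
      rw [hηdef]
      simp only [PiLp.smul_apply, smul_eq_mul, RCLike.inner_apply, conj_trivial]
      ring
    set t₀ : ℝ := ρ - ‖xh - xb‖ with ht₀def
    have ht₀pos : 0 < t₀ := by rw [ht₀def]; linarith
    have hlt : ⟪Fmp xh - y, (WithLp.toLp 2 (fun j => df j xh p h) : EuclideanSpace ℝ (Fin l))⟫ /
        ‖y - Fmp xh‖ < -σ / 2 := by
      rw [hlimval]; linarith
    have hev_quot : ∀ᶠ t in 𝓝[>] (0:ℝ),
        (‖y - Fmp (xh + t • h)‖ - ‖y - Fmp xh‖) / t < -σ / 2 :=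
      hlim.eventually (tendsto_id.eventually_lt_const hlt)
    have hev_small : ∀ᶠ t in 𝓝[>] (0:ℝ), t ∈ Set.Ioo (0:ℝ) t₀ :=
      Ioo_mem_nhdsGT_of_mem ⟨le_refl 0, ht₀pos⟩
    obtain ⟨t, hq1, ht0, htt₀⟩ := (hev_quot.and hev_small).exists
    have hξD : xh + t • h ∈ Metric.closedBall xb ρ := by
      rw [Metric.mem_closedBall, dist_eq_norm]
      have htri : ‖xh + t • h - xb‖ ≤ ‖xh - xb‖ + ‖t • h‖ := by
        have : xh + t • h - xb = (xh - xb) + t • h := by abel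
        rw [this]
        exact norm_add_le _ _
      have hnorm : ‖t • h‖ = t := by
        rw [norm_smul, hhnorm, Real.norm_eq_abs, abs_of_pos ht0, mul_one]
      rw [hnorm] at htri
      rw [ht₀def] at htt₀
      linarith
    have hek2 := hek _ hξD
    have hnormd : ‖xh + t • h - xh‖ = t := by
      have : xh + t • h - xh = t • h := by abel
      rw [this, norm_smul, hhnorm, Real.norm_eq_abs, abs_of_pos ht0, mul_one]
    rw [hnormd] at hek2
    have hge : -lam ≤ (‖y - Fmp (xh + t • h)‖ - ‖y - Fmp xh‖) / t := by
      rw [le_div_iff₀ ht0]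
      have hφ1 : φ xh = ‖y - Fmp xh‖ := rfl
      have hφ2 : φ (xh + t • h) = ‖y - Fmp (xh + t • h)‖ := rfl
      rw [hφ1, hφ2] at hek2
      linarith
    rw [hlamdef] at hge
    linarith
  -- conclusion
  have hmem : xh ∈ {ξ : EuclideanSpace ℝ (Fin n) | ∀ j, f j ξ p = y j} := by
    intro j
    exact congrArg (fun z : EuclideanSpace ℝ (Fin l) => z j) hsol
  calc EMetric.infEdist x {ξ : EuclideanSpace ℝ (Fin n) | ∀ j, f j ξ p = y j}
      ≤ edist x xh := EMetric.infEdist_le_edist_of_mem hmem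
    _ = ENNReal.ofReal ‖x - xh‖ := by rw [edist_dist, dist_eq_norm]
    _ ≤ ENNReal.ofReal (K * ‖y - (show EuclideanSpace ℝ (Fin l) from WithLp.toLp 2 (fun j => f j x p))‖) := by
        show _ ≤ ENNReal.ofReal (K * ‖y - Fmp x‖)
        apply ENNReal.ofReal_le_ofReal
        rw [norm_sub_rev]
        exact hdist_xh_x
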